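/- Let S be the MV-derived semiring of an ℓ-group G with strong unit interval [0, u] (addition a + b = a ∨ b, multiplication a·b = (a ∗ u⁻¹ ∗ b) ∨ 0), and n ≥ 1. Then M_n(S) is subdirectly irreducible if and only if S has a least element e ≠ 0; and if S is subdirectly irreducible then S is totally ordered. -/

import Mathlib

def IsCong {T : Type} (add mul : T → T → T) (r : T → T → Prop) : Prop :=
  Equivalence r ∧ (∀ a b c d, r a b → r c d → r (add a c) (add b d)) ∧
    (∀ a b c d, r a b → r c d → r (mul a c) (mul b d))

def SubIrr {T : Type} (add mul : T → T → T) : Prop :=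
  ∃ r : T → T → Prop, IsCong add mul r ∧ r ≠ (· = ·) ∧
    ∀ s : T → T → Prop, IsCong add mul s → s ≠ (· = ·) → ∀ a b, r a b → s a b

def finSum {S : Type} (add : S → S → S) : {n : ℕ} → (Fin (n + 1) → S) → S
  | 0, f => f 0
  | _ + 1, f => add (finSum add fun i => f i.castSucc) (f (Fin.last _))

def matAdd {S : Type} (add : S → S → S) {n : ℕ} (A B : Fin n → Fin n → S) :
    Fin n → Fin n → S :=
  fun i j => add (A i j) (B i j)

def matMul {S : Type} (add mul : S → S → S) {n : ℕ}
    (A B : Fin (n + 1) → Fin (n + 1) → S) : Fin (n + 1) → Fin (n + 1) → S :=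
  fun i j => finSum add fun k => mul (A i k) (B k j)

/-- Addition of the MV-derived semiring on the interval `[1, u]` of an ℓ-group
(written multiplicatively, identity `1` playing the role of `0`). -/
def mvAdd {G : Type} [Lattice G] [Group G] (u : G)
    (a b : {x : G // 1 ≤ x ∧ x ≤ u}) : {x : G // 1 ≤ x ∧ x ≤ u} :=
  ⟨a.1 ⊔ b.1, le_trans a.2.1 le_sup_left, sup_le a.2.2 b.2.2⟩

/-- Multiplication `a·b = (a * u⁻¹ * b) ⊔ 1` of the MV-derived semiring. -/
def mvMul {G : Type} [Lattice G] [Group G]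
    [CovariantClass G G (· * ·) (· ≤ ·)]
    [CovariantClass G G (Function.swap (· * ·)) (· ≤ ·)]
    (u : G) (hu : 1 < u)
    (a b : {x : G // 1 ≤ x ∧ x ≤ u}) : {x : G // 1 ≤ x ∧ x ≤ u} :=
  ⟨(a.1 * u⁻¹ * b.1) ⊔ 1, le_sup_right,
    sup_le
      (calc a.1 * u⁻¹ * b.1
            ≤ 1 * b.1 := mul_le_mul_left (by simpa using mul_le_mul_left a.2.2 u⁻¹) b.1
          _ = b.1 := one_mul _
          _ ≤ u := b.2.2)
      hu.le⟩


set_option linter.unusedSectionVars false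

section MvAux

variable {G : Type} [Lattice G] [Group G]
    [CovariantClass G G (· * ·) (· ≤ ·)]
    [CovariantClass G G (Function.swap (· * ·)) (· ≤ ·)]

abbrev MvS (u : G) : Type := {x : G // 1 ≤ x ∧ x ≤ u}

variable (u : G) (hu : 1 < u)

def mvBot : MvS u := ⟨1, le_rfl, hu.le⟩

def mvTop : MvS u := ⟨u, hu.le, le_rfl⟩

lemma mvAdd_val (a b : MvS u) : (mvAdd u a b).1 = a.1 ⊔ b.1 := rfl

lemma mvMul_val (a b : MvS u) : (mvMul u hu a b).1 = (a.1 * u⁻¹ * b.1) ⊔ 1 := rfl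

lemma mvMul_bot_left (x : MvS u) : mvMul u hu (mvBot u hu) x = mvBot u hu := by
  apply Subtype.ext
  show (1 * u⁻¹ * x.1) ⊔ 1 = 1
  rw [one_mul]
  exact sup_eq_right.mpr (inv_mul_le_one_iff.mpr x.2.2)

lemma mvMul_bot_right (x : MvS u) : mvMul u hu x (mvBot u hu) = mvBot u hu := by
  apply Subtype.ext
  show (x.1 * u⁻¹ * 1) ⊔ 1 = 1
  rw [mul_one]
  exact sup_eq_right.mpr (mul_inv_le_one_iff_le.mpr x.2.2)

lemma mvMul_top_left (x : MvS u) : mvMul u hu (mvTop u hu) x = x := by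
  apply Subtype.ext
  show (u * u⁻¹ * x.1) ⊔ 1 = x.1
  rw [mul_inv_cancel, one_mul]
  exact sup_eq_left.mpr x.2.1

lemma mvMul_top_right (x : MvS u) : mvMul u hu x (mvTop u hu) = x := by
  apply Subtype.ext
  show (x.1 * u⁻¹ * u) ⊔ 1 = x.1
  rw [mul_assoc, inv_mul_cancel, mul_one]
  exact sup_eq_left.mpr x.2.1

lemma mvAdd_bot_left (x : MvS u) : mvAdd u (mvBot u hu) x = x :=
  Subtype.ext (sup_eq_right.mpr x.2.1)

lemma mvAdd_bot_right (x : MvS u) : mvAdd u x (mvBot u hu) = x :=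
  Subtype.ext (sup_eq_left.mpr x.2.1)

lemma mvAdd_self (x : MvS u) : mvAdd u x x = x := Subtype.ext (sup_idem _)

/-- The congruence `x ∼ y ↔ x ⊔ t = y ⊔ t`. -/
def rS (t a b : MvS u) : Prop := a.1 ⊔ t.1 = b.1 ⊔ t.1

lemma rS_equiv (t : MvS u) : Equivalence (rS u t) :=
  ⟨fun _ => rfl, Eq.symm, Eq.trans⟩

lemma mvMul_mod (a c t : MvS u) :
    (mvMul u hu (mvAdd u a t) (mvAdd u c t)).1 ⊔ t.1 = (mvMul u hu a c).1 ⊔ t.1 := by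
  have hy : ∀ y : MvS u, y.1 * u⁻¹ * t.1 ≤ t.1 := fun y =>
    calc y.1 * u⁻¹ * t.1 ≤ 1 * t.1 :=
          mul_le_mul_left (mul_inv_le_one_iff_le.mpr y.2.2) t.1
      _ = t.1 := one_mul _
  have hy2 : ∀ y : MvS u, t.1 * u⁻¹ * y.1 ≤ t.1 := fun y => by
    rw [mul_assoc]
    calc t.1 * (u⁻¹ * y.1) ≤ t.1 * 1 := mul_le_mul_right (inv_mul_le_one_iff.mpr y.2.2) t.1
      _ = t.1 := mul_one _
  rw [mvMul_val, mvMul_val, mvAdd_val, mvAdd_val, sup_mul, sup_mul, mul_sup, mul_sup]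
  apply le_antisymm
  · refine sup_le (sup_le ?_ (le_sup_of_le_left le_sup_right)) le_sup_right
    refine sup_le (sup_le ?_ ?_) (sup_le ?_ ?_)
    · exact le_sup_of_le_left le_sup_left
    · exact le_sup_of_le_right (hy a)
    · exact le_sup_of_le_right (hy2 c)
    · exact le_sup_of_le_right (hy2 t)
  · refine sup_le (sup_le ?_ ?_) le_sup_right
    · exact le_sup_of_le_left (le_sup_of_le_left (le_sup_of_le_left le_sup_left))
    · exact le_sup_of_le_left le_sup_right

lemma rS_cong (t : MvS u) : IsCong (mvAdd u) (mvMul u hu) (rS u t) := by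
  refine ⟨rS_equiv u t, ?_, ?_⟩
  · intro a b c d h1 h2
    show (a.1 ⊔ c.1) ⊔ t.1 = (b.1 ⊔ d.1) ⊔ t.1
    rw [sup_sup_distrib_right, h1, h2, ← sup_sup_distrib_right]
  · intro a b c d h1 h2
    have ha : mvAdd u a t = mvAdd u b t := Subtype.ext h1
    have hc : mvAdd u c t = mvAdd u d t := Subtype.ext h2
    show (mvMul u hu a c).1 ⊔ t.1 = (mvMul u hu b d).1 ⊔ t.1
    rw [← mvMul_mod u hu a c t, ha, hc, mvMul_mod]

lemma rS_bot_rel (t : MvS u) : rS u t (mvBot u hu) t := by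
  show (1 : G) ⊔ t.1 = t.1 ⊔ t.1
  rw [sup_eq_right.mpr t.2.1, sup_idem]

include hu in
lemma rS_ne (t : MvS u) (ht : t.1 ≠ 1) : rS u t ≠ (· = ·) := by
  intro h
  have h2 := rS_bot_rel u hu t
  rw [h] at h2
  exact ht (congrArg Subtype.val h2).symm

lemma finSum_le {n : ℕ} : ∀ (f : Fin (n+1) → MvS u) (x : G),
    (∀ i, (f i).1 ≤ x) → (finSum (mvAdd u) f).1 ≤ x := by
  induction n with
  | zero => intro f x h; exact h 0
  | succ n ih =>
    intro f x h
    exact sup_le (ih _ _ fun i => h i.castSucc) (h (Fin.last _))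

lemma le_finSum {n : ℕ} : ∀ (f : Fin (n+1) → MvS u) (i : Fin (n+1)),
    (f i).1 ≤ (finSum (mvAdd u) f).1 := by
  induction n with
  | zero => intro f i; rw [Fin.eq_zero i]; exact le_rfl
  | succ n ih =>
    intro f i
    induction i using Fin.lastCases with
    | last => exact le_sup_right
    | cast j =>
      show (f j.castSucc).1 ≤ ((finSum (mvAdd u) fun i => f i.castSucc).1 ⊔ (f (Fin.last _)).1)
      exact le_trans (ih (fun i => f i.castSucc) j) le_sup_left

lemma finSum_eq_of {n : ℕ} (f : Fin (n+1) → MvS u) (i₀ : Fin (n+1))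
    (h : ∀ m, m ≠ i₀ → f m = mvBot u hu) : finSum (mvAdd u) f = f i₀ := by
  apply Subtype.ext
  apply le_antisymm
  · apply finSum_le
    intro i
    by_cases hi : i = i₀
    · subst hi; exact le_rfl
    · rw [h i hi]; exact (f i₀).2.1
  · exact le_finSum u f i₀

lemma finSum_mod {n : ℕ} (t : MvS u) : ∀ (f g : Fin (n+1) → MvS u),
    (∀ k, (f k).1 ⊔ t.1 = (g k).1 ⊔ t.1) →
    (finSum (mvAdd u) f).1 ⊔ t.1 = (finSum (mvAdd u) g).1 ⊔ t.1 := by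
  induction n with
  | zero => intro f g h; exact h 0
  | succ n ih =>
    intro f g h
    show ((finSum (mvAdd u) fun i => f i.castSucc).1 ⊔ (f (Fin.last _)).1) ⊔ t.1
      = ((finSum (mvAdd u) fun i => g i.castSucc).1 ⊔ (g (Fin.last _)).1) ⊔ t.1
    calc ((finSum (mvAdd u) fun i => f i.castSucc).1 ⊔ (f (Fin.last _)).1) ⊔ t.1
        = ((finSum (mvAdd u) fun i => f i.castSucc).1 ⊔ t.1)
            ⊔ ((f (Fin.last _)).1 ⊔ t.1) := sup_sup_distrib_right _ _ _
      _ = ((finSum (mvAdd u) fun i => g i.castSucc).1 ⊔ t.1)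
            ⊔ ((g (Fin.last _)).1 ⊔ t.1) := by
          rw [ih _ _ fun k => h k.castSucc, h (Fin.last _)]
      _ = ((finSum (mvAdd u) fun i => g i.castSucc).1 ⊔ (g (Fin.last _)).1) ⊔ t.1 :=
          (sup_sup_distrib_right _ _ _).symm

/-- Matrix with entry `v` at `(k,l)` and `1` elsewhere. -/
def oneAt {n : ℕ} (k l : Fin n) (v : MvS u) : Fin n → Fin n → MvS u :=
  fun p q => if p = k ∧ q = l then v else mvBot u hu

/-- The all-`1` (bottom) matrix. -/
def botM (n : ℕ) : Fin n → Fin n → MvS u := fun _ _ => mvBot u hu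

lemma oneAt_bot {n : ℕ} (k l : Fin n) : oneAt u hu k l (mvBot u hu) = botM u hu n := by
  funext p q
  simp only [oneAt, botM]
  split <;> rfl

lemma matMul_oneAt_left {n : ℕ} (k i : Fin (n+1)) (A : Fin (n+1) → Fin (n+1) → MvS u) :
    matMul (mvAdd u) (mvMul u hu) (oneAt u hu k i (mvTop u hu)) A
      = fun p q => if p = k then A i q else mvBot u hu := by
  funext p q
  show finSum (mvAdd u) (fun m => mvMul u hu (oneAt u hu k i (mvTop u hu) p m) (A m q)) = _
  by_cases hp : p = k
  · rw [finSum_eq_of u hu _ i ?h, if_pos hp]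
    · show mvMul u hu (oneAt u hu k i (mvTop u hu) p i) (A i q) = A i q
      rw [oneAt, if_pos ⟨hp, rfl⟩, mvMul_top_left]
    case h =>
      intro m hm
      show mvMul u hu (oneAt u hu k i (mvTop u hu) p m) (A m q) = mvBot u hu
      rw [oneAt, if_neg (fun hh => hm hh.2), mvMul_bot_left]
  · rw [finSum_eq_of u hu _ i ?h, if_neg hp]
    · show mvMul u hu (oneAt u hu k i (mvTop u hu) p i) (A i q) = mvBot u hu
      rw [oneAt, if_neg (fun hh => hp hh.1), mvMul_bot_left]
    case h =>
      intro m hm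
      show mvMul u hu (oneAt u hu k i (mvTop u hu) p m) (A m q) = mvBot u hu
      rw [oneAt, if_neg (fun hh => hp hh.1), mvMul_bot_left]

lemma matMul_oneAt_right {n : ℕ} (j l : Fin (n+1)) (A : Fin (n+1) → Fin (n+1) → MvS u) :
    matMul (mvAdd u) (mvMul u hu) A (oneAt u hu j l (mvTop u hu))
      = fun p q => if q = l then A p j else mvBot u hu := by
  funext p q
  show finSum (mvAdd u) (fun m => mvMul u hu (A p m) (oneAt u hu j l (mvTop u hu) m q)) = _
  rw [finSum_eq_of u hu _ j ?h]
  · show mvMul u hu (A p j) (oneAt u hu j l (mvTop u hu) j q) = _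
    by_cases hq : q = l
    · rw [if_pos hq, oneAt, if_pos ⟨rfl, hq⟩, mvMul_top_right]
    · rw [if_neg hq, oneAt, if_neg (fun hh => hq hh.2), mvMul_bot_right]
  case h =>
    intro m hm
    show mvMul u hu (A p m) (oneAt u hu j l (mvTop u hu) m q) = mvBot u hu
    rw [oneAt, if_neg (fun hh => hm hh.1), mvMul_bot_right]

lemma matMul_oneAt_oneAt {n : ℕ} (k l m' : Fin (n+1)) (v w : MvS u) :
    matMul (mvAdd u) (mvMul u hu) (oneAt u hu k l v) (oneAt u hu l m' w)
      = oneAt u hu k m' (mvMul u hu v w) := by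
  funext p q
  show finSum (mvAdd u) (fun r => mvMul u hu (oneAt u hu k l v p r) (oneAt u hu l m' w r q)) = _
  rw [finSum_eq_of u hu _ l ?h]
  · show mvMul u hu (oneAt u hu k l v p l) (oneAt u hu l m' w l q)
      = oneAt u hu k m' (mvMul u hu v w) p q
    by_cases hp : p = k <;> by_cases hq : q = m'
    · rw [oneAt, if_pos ⟨hp, rfl⟩, oneAt, if_pos ⟨rfl, hq⟩, oneAt, if_pos ⟨hp, hq⟩]
    · rw [show oneAt u hu l m' w l q = mvBot u hu from if_neg (fun hh => hq hh.2),
        mvMul_bot_right, oneAt, if_neg (fun hh => hq hh.2)]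
    · rw [show oneAt u hu k l v p l = mvBot u hu from if_neg (fun hh => hp hh.1),
        mvMul_bot_left, oneAt, if_neg (fun hh => hp hh.1)]
    · rw [show oneAt u hu k l v p l = mvBot u hu from if_neg (fun hh => hp hh.1),
        mvMul_bot_left, oneAt, if_neg (fun hh => hp hh.1)]
  case h =>
    intro r hr
    show mvMul u hu (oneAt u hu k l v p r) (oneAt u hu l m' w r q) = mvBot u hu
    rw [show oneAt u hu l m' w r q = mvBot u hu from if_neg (fun hh => hr hh.1),
      mvMul_bot_right]

lemma matAdd_oneAt {n : ℕ} (k l : Fin n) (v w : MvS u) :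
    matAdd (mvAdd u) (oneAt u hu k l v) (oneAt u hu k l w)
      = oneAt u hu k l (mvAdd u v w) := by
  funext p q
  show mvAdd u (oneAt u hu k l v p q) (oneAt u hu k l w p q) = _
  by_cases h : p = k ∧ q = l
  · rw [oneAt, if_pos h, oneAt, if_pos h, oneAt, if_pos h]
  · rw [oneAt, if_neg h, oneAt, if_neg h, oneAt, if_neg h,
      mvAdd_bot_right]

/-- The entrywise congruence modulo `t` on matrices. -/
def rM (t : MvS u) {n : ℕ} (A B : Fin n → Fin n → MvS u) : Prop :=
  ∀ i j, rS u t (A i j) (B i j)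

lemma rM_cong (t : MvS u) {n : ℕ} :
    IsCong (matAdd (mvAdd u)) (matMul (mvAdd u) (mvMul u hu)) (rM u t (n := n+1)) := by
  refine ⟨⟨fun A i j => rfl, fun h i j => (h i j).symm,
    fun h1 h2 i j => (h1 i j).trans (h2 i j)⟩, ?_, ?_⟩
  · intro A B C D h1 h2 i j
    exact (rS_cong u hu t).2.1 _ _ _ _ (h1 i j) (h2 i j)
  · intro A B C D h1 h2 i j
    exact finSum_mod u t _ _ fun k => (rS_cong u hu t).2.2 _ _ _ _ (h1 i k) (h2 k j)

lemma rM_rel (t : MvS u) {n : ℕ} :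
    rM u t (botM u hu n) (fun _ _ => t) := fun _ _ => rS_bot_rel u hu t

include hu in
lemma rM_ne (t : MvS u) (ht : t.1 ≠ 1) {n : ℕ} : rM u t (n := n+1) ≠ (· = ·) := by
  intro h
  have h2 := rM_rel u hu t (n := n+1)
  rw [h] at h2
  exact ht (congrArg Subtype.val (congrFun (congrFun h2 0) 0)).symm

lemma rel_ne_eq {T : Type} {s : T → T → Prop} (hrefl : ∀ x, s x x)
    (hne : s ≠ (· = ·)) : ∃ a b, s a b ∧ a ≠ b := by
  by_contra hc
  push_neg at hc
  exact hne (funext fun a => funext fun b =>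
    propext ⟨fun h => hc a b h, fun h => h ▸ hrefl a⟩)

include hu in
lemma exists_least_aux (a c : MvS u) (hle : a.1 ≤ c.1) (hne : a.1 ≠ c.1)
    (h : ∀ t : MvS u, t.1 ≠ 1 → c.1 ≤ a.1 ⊔ t.1) :
    ∃ e : MvS u, e.1 ≠ 1 ∧ ∀ x : MvS u, x.1 ≠ 1 → e.1 ≤ x.1 := by
  refine ⟨⟨c.1 * a.1⁻¹ ⊔ 1, le_sup_right, sup_le ?_ hu.le⟩, ?_, ?_⟩
  · calc c.1 * a.1⁻¹ ≤ u * 1 := mul_le_mul' c.2.2 (inv_le_one'.mpr a.2.1)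
      _ = u := mul_one u
  · intro hh
    have h1 : c.1 * a.1⁻¹ ≤ 1 := sup_eq_right.mp hh
    exact hne (le_antisymm hle (mul_inv_le_one_iff_le.mp h1))
  · intro x hx
    refine sup_le ?_ x.2.1
    calc c.1 * a.1⁻¹ ≤ (a.1 ⊔ x.1) * a.1⁻¹ := mul_le_mul_left (h x hx) _
      _ = a.1 * a.1⁻¹ ⊔ x.1 * a.1⁻¹ := sup_mul _ _ _
      _ ≤ 1 ⊔ x.1 := by
          rw [mul_inv_cancel]
          exact sup_le_sup_left (by
            calc x.1 * a.1⁻¹ ≤ x.1 * 1 := mul_le_mul_right (inv_le_one'.mpr a.2.1) _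
              _ = x.1 := mul_one _) 1
      _ = x.1 := sup_eq_right.mpr x.2.1

include hu in
lemma exists_least (a b : MvS u) (hab : a ≠ b)
    (h : ∀ t : MvS u, t.1 ≠ 1 → a.1 ⊔ t.1 = b.1 ⊔ t.1) :
    ∃ e : MvS u, e.1 ≠ 1 ∧ ∀ x : MvS u, x.1 ≠ 1 → e.1 ≤ x.1 := by
  by_cases hba : b.1 ≤ a.1
  · refine exists_least_aux u hu b a hba (fun hh => hab (Subtype.ext hh.symm)) ?_
    intro t ht
    calc a.1 ≤ a.1 ⊔ t.1 := le_sup_left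
      _ = b.1 ⊔ t.1 := h t ht
  · refine exists_least_aux u hu a (mvAdd u a b) le_sup_left
      (fun hh => hba (hh ▸ le_sup_right)) ?_
    intro t ht
    show a.1 ⊔ b.1 ≤ a.1 ⊔ t.1
    calc a.1 ⊔ b.1 ≤ (a.1 ⊔ t.1) ⊔ (b.1 ⊔ t.1) :=
        sup_le_sup le_sup_left le_sup_left
      _ = a.1 ⊔ t.1 := by rw [h t ht, sup_idem]

section Min

variable {n : ℕ} (e : MvS u) (he : e.1 ≠ 1) (hle : ∀ x : MvS u, x.1 ≠ 1 → e.1 ≤ x.1)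
  (s : (Fin (n+1) → Fin (n+1) → MvS u) → (Fin (n+1) → Fin (n+1) → MvS u) → Prop)
  (hs : IsCong (matAdd (mvAdd u)) (matMul (mvAdd u) (mvMul u hu)) s)

include hs

include he hle in
lemma single_step (k l : Fin (n+1)) (x y : MvS u) (hxy : x.1 ≤ y.1) (hne : x ≠ y)
    (hrel : s (oneAt u hu k l x) (oneAt u hu k l y)) :
    s (botM u hu (n+1)) (oneAt u hu k l e) := by
  have hyx : ¬ y.1 ≤ x.1 := fun hh => hne (Subtype.ext (le_antisymm hxy hh))
  set t : MvS u := ⟨y.1 * x.1⁻¹ ⊔ 1, le_sup_right, sup_le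
    (by calc y.1 * x.1⁻¹ ≤ u * 1 := mul_le_mul' y.2.2 (inv_le_one'.mpr x.2.1)
          _ = u := mul_one u) hu.le⟩ with htdef
  have ht : t.1 ≠ 1 := by
    intro hh
    exact hyx (mul_inv_le_one_iff_le.mp (sup_eq_right.mp hh))
  set z : MvS u := ⟨u * x.1⁻¹,
    by calc (1:G) = x.1 * x.1⁻¹ := (mul_inv_cancel _).symm
         _ ≤ u * x.1⁻¹ := mul_le_mul_left x.2.2 _,
    by calc u * x.1⁻¹ ≤ u * 1 := mul_le_mul_right (inv_le_one'.mpr x.2.1) u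
         _ = u := mul_one u⟩ with hzdef
  have hz1 : mvMul u hu x z = mvBot u hu := by
    apply Subtype.ext
    show (x.1 * u⁻¹ * (u * x.1⁻¹)) ⊔ 1 = 1
    have hg : x.1 * u⁻¹ * (u * x.1⁻¹) = 1 := by group
    rw [hg, sup_idem]
  have hz2 : mvMul u hu y z = t := by
    apply Subtype.ext
    show (y.1 * u⁻¹ * (u * x.1⁻¹)) ⊔ 1 = y.1 * x.1⁻¹ ⊔ 1
    have hg : y.1 * u⁻¹ * (u * x.1⁻¹) = y.1 * x.1⁻¹ := by group
    rw [hg]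
  have h1 := hs.2.2 _ _ _ _ hrel (hs.1.refl (oneAt u hu l l z))
  rw [matMul_oneAt_oneAt, matMul_oneAt_oneAt, hz1, hz2, oneAt_bot] at h1
  -- h1 : s botM (oneAt k l t)
  set z' : MvS u := ⟨u * t.1⁻¹ * e.1,
    by calc (1:G) = t.1 * t.1⁻¹ := (mul_inv_cancel _).symm
         _ ≤ u * t.1⁻¹ := mul_le_mul_left t.2.2 _
         _ ≤ u * t.1⁻¹ * e.1 := le_mul_of_one_le_right' e.2.1,
    by calc u * t.1⁻¹ * e.1 = u * (t.1⁻¹ * e.1) := mul_assoc _ _ _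
         _ ≤ u * 1 := mul_le_mul_right (inv_mul_le_one_iff.mpr (hle t ht)) u
         _ = u := mul_one u⟩ with hz'def
  have hz3 : mvMul u hu t z' = e := by
    apply Subtype.ext
    show (t.1 * u⁻¹ * (u * t.1⁻¹ * e.1)) ⊔ 1 = e.1
    have hg : t.1 * u⁻¹ * (u * t.1⁻¹ * e.1) = e.1 := by group
    rw [hg]
    exact sup_eq_left.mpr e.2.1
  rw [← oneAt_bot u hu k l] at h1
  have h2 := hs.2.2 _ _ _ _ h1 (hs.1.refl (oneAt u hu l l z'))
  rw [matMul_oneAt_oneAt, matMul_oneAt_oneAt, hz3, mvMul_bot_left, oneAt_bot] at h2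
  exact h2

include he hle in
lemma bot_rel_const
    (hsingle : ∀ k l : Fin (n+1), s (botM u hu (n+1)) (oneAt u hu k l e)) :
    s (botM u hu (n+1)) (fun _ _ => e) := by
  have hb : matAdd (mvAdd u) (botM u hu (n+1)) (botM u hu (n+1)) = botM u hu (n+1) := by
    funext p q
    exact mvAdd_self u _
  have key : ∀ F : Finset (Fin (n+1) × Fin (n+1)),
      s (botM u hu (n+1)) (fun p q => if (p, q) ∈ F then e else mvBot u hu) := by
    intro F
    induction F using Finset.induction_on with
    | empty =>
      have hE : (fun (p q : Fin (n+1)) => if (p, q) ∈ (∅ : Finset (Fin (n+1) × Fin (n+1)))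
          then e else mvBot u hu) = botM u hu (n+1) := by
        funext p q
        simp [botM]
      rw [hE]
      exact hs.1.refl _
    | @insert kl F hkl ih =>
      have hnew : matAdd (mvAdd u) (oneAt u hu kl.1 kl.2 e)
          (fun p q => if (p, q) ∈ F then e else mvBot u hu)
          = (fun p q => if (p, q) ∈ insert kl F then e else mvBot u hu) := by
        funext p q
        apply Subtype.ext
        show (oneAt u hu kl.1 kl.2 e p q).1 ⊔ (if (p, q) ∈ F then e else mvBot u hu).1
          = (if (p, q) ∈ insert kl F then e else mvBot u hu).1
        by_cases h1 : p = kl.1 ∧ q = kl.2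
        · have hmem : (p, q) ∈ insert kl F := by
            rw [Finset.mem_insert]
            exact Or.inl (by rw [Prod.ext_iff]; exact ⟨h1.1, h1.2⟩)
          rw [oneAt, if_pos h1, if_pos hmem]
          by_cases h2 : (p, q) ∈ F
          · rw [if_pos h2]; exact sup_idem _
          · rw [if_neg h2]; exact sup_eq_left.mpr e.2.1
        · have hne : (p, q) ≠ kl := by
            intro hh
            rw [Prod.ext_iff] at hh
            exact h1 ⟨hh.1, hh.2⟩
          rw [oneAt, if_neg h1]
          by_cases h2 : (p, q) ∈ F
          · rw [if_pos h2, if_pos (Finset.mem_insert.mpr (Or.inr h2))]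
            exact sup_eq_right.mpr e.2.1
          · rw [if_neg h2, if_neg (by
              rw [Finset.mem_insert]
              exact fun hh => hh.elim hne h2)]
            exact sup_idem _
      have h3 := hs.2.1 _ _ _ _ (hsingle kl.1 kl.2) ih
      rw [hb, hnew] at h3
      exact h3
  have h4 := key Finset.univ
  have hE : (fun (p q : Fin (n+1)) => if (p, q) ∈ (Finset.univ : Finset (Fin (n+1) × Fin (n+1)))
      then e else mvBot u hu) = (fun _ _ => e) := by
    funext p q
    simp
  rw [hE] at h4
  exact h4

include he hle in
lemma matrix_min (hsne : s ≠ (· = ·)) :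
    ∀ A B, rM u e A B → s A B := by
  obtain ⟨A₀, B₀, hAB, hABne⟩ := rel_ne_eq hs.1.refl hsne
  have hij : ∃ i j, A₀ i j ≠ B₀ i j := by
    by_contra hc
    push_neg at hc
    exact hABne (funext fun i => funext fun j => hc i j)
  obtain ⟨i, j, hij⟩ := hij
  have hsingle : ∀ k l : Fin (n+1), s (botM u hu (n+1)) (oneAt u hu k l e) := by
    intro k l
    have h1 := hs.2.2 _ _ _ _ (hs.1.refl (oneAt u hu k i (mvTop u hu)))
      (hs.2.2 _ _ _ _ hAB (hs.1.refl (oneAt u hu j l (mvTop u hu))))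
    rw [matMul_oneAt_right, matMul_oneAt_right] at h1
    -- now multiply by unit on the left; rewrite the middle matrices
    have hform : ∀ X : Fin (n+1) → Fin (n+1) → MvS u,
        matMul (mvAdd u) (mvMul u hu) (oneAt u hu k i (mvTop u hu))
          (fun p q => if q = l then X p j else mvBot u hu)
          = oneAt u hu k l (X i j) := by
      intro X
      rw [matMul_oneAt_left]
      funext p q
      by_cases hp : p = k <;> by_cases hq : q = l
      · rw [if_pos hp, if_pos hq, oneAt, if_pos ⟨hp, hq⟩]
      · rw [if_pos hp, if_neg hq, oneAt, if_neg (fun hh => hq hh.2)]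
      · rw [if_neg hp, oneAt, if_neg (fun hh => hp hh.1)]
      · rw [if_neg hp, oneAt, if_neg (fun hh => hp hh.1)]
    rw [hform A₀, hform B₀] at h1
    -- h1 : s (oneAt k l a) (oneAt k l b) with a ≠ b
    have hadd := hs.2.1 _ _ _ _ (hs.1.refl (oneAt u hu k l (A₀ i j))) h1
    rw [matAdd_oneAt, mvAdd_self, matAdd_oneAt] at hadd
    -- hadd : s (oneAt k l a) (oneAt k l (a ⊔ b))
    by_cases hc : mvAdd u (A₀ i j) (B₀ i j) = A₀ i j
    · -- then b ≤ a strictly below; use the symmetric pair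
      have hba : (B₀ i j).1 ≤ (A₀ i j).1 := by
        have h' : (A₀ i j).1 ⊔ (B₀ i j).1 = (A₀ i j).1 := congrArg Subtype.val hc
        exact sup_eq_left.mp h'
      exact single_step u hu e he hle s hs k l (B₀ i j) (A₀ i j) hba
        (fun hh => hij hh.symm) (hs.1.symm h1)
    · exact single_step u hu e he hle s hs k l (A₀ i j) (mvAdd u (A₀ i j) (B₀ i j))
        (le_sup_left : (A₀ i j).1 ≤ (A₀ i j).1 ⊔ (B₀ i j).1) (fun hh => hc hh.symm) hadd
  have hconst := bot_rel_const u hu e he hle s hs hsingle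
  intro A B hrAB
  have hA : matAdd (mvAdd u) A (botM u hu (n+1)) = A := by
    funext p q
    exact mvAdd_bot_right u hu _
  have h5 : s A (matAdd (mvAdd u) A (fun _ _ => e)) := by
    have := hs.2.1 _ _ _ _ (hs.1.refl A) hconst
    rw [hA] at this
    exact this
  have h6 : s B (matAdd (mvAdd u) B (fun _ _ => e)) := by
    have := hs.2.1 _ _ _ _ (hs.1.refl B) hconst
    have hB : matAdd (mvAdd u) B (botM u hu (n+1)) = B := by
      funext p q
      exact mvAdd_bot_right u hu _
    rw [hB] at this
    exact this
  have heq : matAdd (mvAdd u) A (fun _ _ => e) = matAdd (mvAdd u) B (fun _ _ => e) := by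
    funext p q
    exact Subtype.ext (hrAB p q)
  exact hs.1.trans h5 (heq ▸ hs.1.symm h6)

end Min

end MvAux

/-- For the MV-derived semiring `S = [1,u]` of an ℓ-group and any `n ≥ 1`:
`M_n(S)` is subdirectly irreducible iff `S` has a least element `e ≠ 1`;
moreover if `S` is subdirectly irreducible then `S` is totally ordered. -/
theorem stmt_18 {G : Type} [Lattice G] [Group G]
    [CovariantClass G G (· * ·) (· ≤ ·)]
    [CovariantClass G G (Function.swap (· * ·)) (· ≤ ·)]
    (u : G) (hu : 1 < u) :
    (∀ m : ℕ,
      SubIrr (T := Fin (m + 1) → Fin (m + 1) → {x : G // 1 ≤ x ∧ x ≤ u})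
          (matAdd (mvAdd u)) (matMul (mvAdd u) (mvMul u hu)) ↔
        ∃ e : {x : G // 1 ≤ x ∧ x ≤ u}, e.1 ≠ 1 ∧
          ∀ x : {x : G // 1 ≤ x ∧ x ≤ u}, x.1 ≠ 1 → e.1 ≤ x.1) ∧
      (SubIrr (mvAdd u) (mvMul u hu) →
        ∀ x y : {x : G // 1 ≤ x ∧ x ≤ u}, x.1 ≤ y.1 ∨ y.1 ≤ x.1) := by
  constructor
  · intro m
    constructor
    · rintro ⟨r, hr, hrne, hmin⟩
      obtain ⟨A, B, hAB, hABne⟩ := rel_ne_eq hr.1.refl hrne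
      have hij : ∃ i j, A i j ≠ B i j := by
        by_contra hc
        push_neg at hc
        exact hABne (funext fun i => funext fun j => hc i j)
      obtain ⟨i, j, hij⟩ := hij
      refine exists_least u hu (A i j) (B i j) hij ?_
      intro t ht
      exact hmin (rM u t) (rM_cong u hu t) (rM_ne u hu t ht) A B hAB i j
    · rintro ⟨e, he, hle⟩
      exact ⟨rM u e, rM_cong u hu e, rM_ne u hu e he,
        fun s hs hsne A B hAB => matrix_min u hu e he hle s hs hsne A B hAB⟩
  · rintro ⟨r, hr, hrne, hmin⟩ x y
    obtain ⟨a, b, hab, habne⟩ := rel_ne_eq hr.1.refl hrne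
    have h : ∀ t : MvS u, t.1 ≠ 1 → a.1 ⊔ t.1 = b.1 ⊔ t.1 := fun t ht =>
      hmin (rS u t) (rS_cong u hu t) (rS_ne u hu t ht) a b hab
    obtain ⟨e, he, hle⟩ := exists_least u hu a b habne h
    by_contra hcon
    push_neg at hcon
    obtain ⟨hxy, hyx⟩ := hcon
    have hinf : (1:G) ≤ x.1 ⊓ y.1 := le_inf x.2.1 y.2.1
    have hp1 : (1:G) ≤ x.1 * (x.1 ⊓ y.1)⁻¹ := by
      calc (1:G) = (x.1 ⊓ y.1) * (x.1 ⊓ y.1)⁻¹ := (mul_inv_cancel _).symm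
        _ ≤ x.1 * (x.1 ⊓ y.1)⁻¹ := mul_le_mul_left inf_le_left _
    have hp2 : x.1 * (x.1 ⊓ y.1)⁻¹ ≤ u := by
      calc x.1 * (x.1 ⊓ y.1)⁻¹ ≤ u * 1 := mul_le_mul' x.2.2 (inv_le_one'.mpr hinf)
        _ = u := mul_one u
    have hq1 : (1:G) ≤ y.1 * (x.1 ⊓ y.1)⁻¹ := by
      calc (1:G) = (x.1 ⊓ y.1) * (x.1 ⊓ y.1)⁻¹ := (mul_inv_cancel _).symm
        _ ≤ y.1 * (x.1 ⊓ y.1)⁻¹ := mul_le_mul_left inf_le_right _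
    have hq2 : y.1 * (x.1 ⊓ y.1)⁻¹ ≤ u := by
      calc y.1 * (x.1 ⊓ y.1)⁻¹ ≤ u * 1 := mul_le_mul' y.2.2 (inv_le_one'.mpr hinf)
        _ = u := mul_one u
    have hpne : x.1 * (x.1 ⊓ y.1)⁻¹ ≠ 1 := by
      intro hh
      have hxc : x.1 = x.1 ⊓ y.1 := mul_inv_eq_one.mp hh
      exact hxy (by rw [hxc]; exact inf_le_right)
    have hqne : y.1 * (x.1 ⊓ y.1)⁻¹ ≠ 1 := by
      intro hh
      have hyc : y.1 = x.1 ⊓ y.1 := mul_inv_eq_one.mp hh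
      exact hyx (by rw [hyc]; exact inf_le_left)
    have he1 := hle ⟨x.1 * (x.1 ⊓ y.1)⁻¹, hp1, hp2⟩ hpne
    have he2 := hle ⟨y.1 * (x.1 ⊓ y.1)⁻¹, hq1, hq2⟩ hqne
    have hei : e.1 ≤ (x.1 * (x.1 ⊓ y.1)⁻¹) ⊓ (y.1 * (x.1 ⊓ y.1)⁻¹) := le_inf he1 he2
    rw [← inf_mul, mul_inv_cancel] at hei
    exact he (le_antisymm hei e.2.1)
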